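/- Consider ω̄ ∈ ℝ^n, b̄ ∈ ℝ^n, P̄ ∈ ℝ^n, λ̄ ∈ ℝ, u ∈ ℝ^{n−1}, μ̄_b, μ̄_g ∈ ℝ^n, ρ > 0, σ ∈ ℝ satisfying the equilibrium conditions: D_tᵀω̄ = 0; 0 = −D_t u − Aω̄ + P̄ − P_d; 0 = P̄ − g(b̄) + μ̄_b; 0 = 1λ̄ − b̄ + ρ 1 1ᵀ(P_d − P̄) − σ²ω̄ + μ̄_g; 0 = 1ᵀ(P_d − P̄); b̄ ≥ 0, μ̄_b ≥ 0, b̄ᵀμ̄_b = 0; P̄ ≥ 0, μ̄_g ≥ 0, P̄ᵀμ̄_g = 0. Suppose moreover that P̄_i > 0 for at least two distinct indices i. Then ω̄ = 0, P̄ is the unique minimizer of the ED problem, and b̄ is an efficient Nash equilibrium of the inelastic electricity market game. -/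

import Mathlib

open Finset

noncomputable section

/-- Feasible production profiles for the dispatch problems:
power balance `1ᵀP = 1ᵀP_d` and componentwise nonnegativity. -/
def Feasible {n : ℕ} (Pd P : Fin n → ℝ) : Prop :=
  (∑ i, P i = ∑ i, Pd i) ∧ ∀ i, 0 ≤ P i

/-- `P` is an optimizer of the ISO problem for bids `b`:
it minimizes `bᵀP` over the feasible set. -/
def IsISOOpt {n : ℕ} (Pd b P : Fin n → ℝ) : Prop :=
  Feasible Pd P ∧ ∀ Q, Feasible Pd Q → ∑ i, b i * P i ≤ ∑ i, b i * Q i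

/-- `P` is a minimizer of the economic dispatch (ED) problem. -/
def IsEDOpt {n : ℕ} (C : Fin n → ℝ → ℝ) (Pd P : Fin n → ℝ) : Prop :=
  Feasible Pd P ∧ ∀ Q, Feasible Pd Q → ∑ i, C i (P i) ≤ ∑ i, C i (Q i)

/-- `(P, lam, mu)` is a KKT triple for the ED problem, with `C' i` the marginal
cost of generator `i`. -/
def IsKKT {n : ℕ} (C' : Fin n → ℝ → ℝ) (Pd P : Fin n → ℝ) (lam : ℝ)
    (mu : Fin n → ℝ) : Prop :=
  (∀ i, C' i (P i) = lam + mu i) ∧ (∑ i, P i = ∑ i, Pd i) ∧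
    (∀ i, 0 ≤ P i) ∧ (∀ i, 0 ≤ mu i) ∧ (∑ i, P i * mu i = 0)

/-- Payoff of a generator with cost `Ci` bidding `bi` and producing `Pi`. -/
def Payoff (Ci : ℝ → ℝ) (bi Pi : ℝ) : ℝ := Pi * bi - Ci Pi

/-- `bstar` is a Nash equilibrium of the inelastic electricity market game. -/
def IsNash {n : ℕ} (C : Fin n → ℝ → ℝ) (Pd bstar : Fin n → ℝ) : Prop :=
  (∀ i, 0 ≤ bstar i) ∧
  ∃ P0, IsISOOpt Pd bstar P0 ∧
    ∀ i (bi : ℝ), 0 ≤ bi → bi ≠ bstar i →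
      ∀ P, IsISOOpt Pd (Function.update bstar i bi) P →
        Payoff (C i) bi (P i) ≤ Payoff (C i) (bstar i) (P0 i)

/-- `bstar` is an efficient bid: the optimizer of the ED problem is also an
optimizer of the ISO problem for bids `bstar`, and each `Pstar i` maximizes
the profit `P ↦ P * bstar i - C i P` over `P ≥ 0`. -/
def IsEfficientBid {n : ℕ} (C : Fin n → ℝ → ℝ) (Pd bstar : Fin n → ℝ) : Prop :=
  (∀ i, 0 ≤ bstar i) ∧
  ∀ Pstar, IsEDOpt C Pd Pstar →
    IsISOOpt Pd bstar Pstar ∧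
      ∀ i, ∀ P, 0 ≤ P → Payoff (C i) (bstar i) P ≤ Payoff (C i) (bstar i) (Pstar i)

/-- Standing assumptions on a generator cost function: continuously
differentiable with derivative `Cf'`, strongly convex on `[0, ∞)`, and
nonnegative marginal cost at zero. -/
def CostAssumptions (Cf Cf' : ℝ → ℝ) : Prop :=
  (∀ x, HasDerivAt Cf (Cf' x) x) ∧ Continuous Cf' ∧
    (∃ m : ℝ, 0 < m ∧
      ∀ x y, 0 ≤ x → 0 ≤ y → (Cf' x - Cf' y) * (x - y) ≥ m * (x - y) ^ 2) ∧
    0 ≤ Cf' 0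

/-- `P` is the unique maximizer of the profit `Q ↦ β * Q - Cf Q` over `Q ≥ 0`. -/
def IsUniqueArgmaxProfit (Cf : ℝ → ℝ) (β P : ℝ) : Prop :=
  0 ≤ P ∧ (∀ Q, 0 ≤ Q → β * Q - Cf Q ≤ β * P - Cf P) ∧
    ∀ Q, 0 ≤ Q → (∀ R, 0 ≤ R → β * R - Cf R ≤ β * Q - Cf Q) → Q = P

open Finset Set Filter Topology

lemma cost_mono {Cf Cf' : ℝ → ℝ} (h : CostAssumptions Cf Cf') {x y : ℝ}
    (hx : 0 ≤ x) (hy : 0 ≤ y) (hxy : x < y) : Cf' x < Cf' y := by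
  obtain ⟨-, -, ⟨m, hm, hsc⟩, -⟩ := h
  have := hsc y x hy hx
  nlinarith [mul_pos hm (pow_pos (sub_pos.mpr hxy) 2), sub_pos.mpr hxy]

lemma cost_deriv_nonneg {Cf Cf' : ℝ → ℝ} (h : CostAssumptions Cf Cf') {x : ℝ}
    (hx : 0 ≤ x) : 0 ≤ Cf' x := by
  rcases eq_or_lt_of_le hx with rfl | hx'
  · exact h.2.2.2
  · exact le_trans h.2.2.2 (cost_mono h le_rfl hx hx').le

lemma grad_lt {Cf Cf' : ℝ → ℝ} (h : CostAssumptions Cf Cf') {x y : ℝ}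
    (hx : 0 ≤ x) (hy : 0 ≤ y) (hne : x ≠ y) :
    Cf x + Cf' x * (y - x) < Cf y := by
  have hd := h.1
  rcases hne.lt_or_gt with hlt | hlt
  · obtain ⟨c, hc1, hc2⟩ := exists_hasDerivAt_eq_slope Cf Cf' hlt
      (fun z _ => (hd z).continuousAt.continuousWithinAt) (fun z hz => hd z)
    have hcx : Cf' x < Cf' c := cost_mono h hx (hx.trans hc1.1.le) hc1.1
    have : Cf y - Cf x = Cf' c * (y - x) := by
      rw [eq_div_iff (by linarith [hc1.1, hc1.2] : y - x ≠ 0)] at hc2; linarith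
    nlinarith [hc1.1, hc1.2]
  · obtain ⟨c, hc1, hc2⟩ := exists_hasDerivAt_eq_slope Cf Cf' hlt
      (fun z _ => (hd z).continuousAt.continuousWithinAt) (fun z hz => hd z)
    have hcx : Cf' c < Cf' x := cost_mono h (hy.trans hc1.1.le) hx hc1.2
    have : Cf x - Cf y = Cf' c * (x - y) := by
      rw [eq_div_iff (by linarith [hc1.1, hc1.2] : x - y ≠ 0)] at hc2; linarith
    nlinarith [hc1.1, hc1.2]

lemma grad_le {Cf Cf' : ℝ → ℝ} (h : CostAssumptions Cf Cf') {x y : ℝ}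
    (hx : 0 ≤ x) (hy : 0 ≤ y) : Cf x + Cf' x * (y - x) ≤ Cf y := by
  rcases eq_or_ne x y with rfl | hne
  · simp
  · exact (grad_lt h hx hy hne).le

lemma foc_le {Cf Cf' : ℝ → ℝ} (h : CostAssumptions Cf Cf') {β P : ℝ} (hP : 0 ≤ P)
    (hmax : ∀ Q, 0 ≤ Q → β * Q - Cf Q ≤ β * P - Cf P) : β ≤ Cf' P := by
  have hdf : HasDerivAt (fun x => β * x - Cf x) (β - Cf' P) P := by
    exact (((hasDerivAt_id P).const_mul β).sub (h.1 P)).congr_deriv (by simp)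
  have hslope : Tendsto (slope (fun x => β * x - Cf x) P) (𝓝[>] P) (𝓝 (β - Cf' P)) :=
    (hasDerivAt_iff_tendsto_slope.mp hdf).mono_left
      (nhdsWithin_mono _ fun x hx => ne_of_gt hx)
  have hineq : ∀ᶠ x in 𝓝[>] P, slope (fun x => β * x - Cf x) P x ≤ 0 := by
    filter_upwards [self_mem_nhdsWithin] with x hx
    have h1 : β * x - Cf x ≤ β * P - Cf P := hmax x (hP.trans (le_of_lt hx))
    rw [slope_def_field]
    exact div_nonpos_of_nonpos_of_nonneg (by linarith)
      (by simp only [Set.mem_Ioi] at hx; linarith)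
  linarith [le_of_tendsto hslope hineq]

lemma foc_ge {Cf Cf' : ℝ → ℝ} (h : CostAssumptions Cf Cf') {β P : ℝ} (hP : 0 < P)
    (hmax : ∀ Q, 0 ≤ Q → β * Q - Cf Q ≤ β * P - Cf P) : Cf' P ≤ β := by
  have hdf : HasDerivAt (fun x => β * x - Cf x) (β - Cf' P) P := by
    exact (((hasDerivAt_id P).const_mul β).sub (h.1 P)).congr_deriv (by simp)
  have hslope : Tendsto (slope (fun x => β * x - Cf x) P) (𝓝[<] P) (𝓝 (β - Cf' P)) :=
    (hasDerivAt_iff_tendsto_slope.mp hdf).mono_left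
      (nhdsWithin_mono _ fun x hx => ne_of_lt hx)
  have hineq : ∀ᶠ x in 𝓝[<] P, 0 ≤ slope (fun x => β * x - Cf x) P x := by
    filter_upwards [Ioo_mem_nhdsLT_of_mem (⟨hP, le_rfl⟩ : P ∈ Set.Ioc 0 P)] with x hx
    have h1 : β * x - Cf x ≤ β * P - Cf P := hmax x hx.1.le
    rw [slope_def_field]
    exact div_nonneg_iff.mpr (Or.inr ⟨by linarith, by linarith [hx.2]⟩)
  linarith [ge_of_tendsto hslope hineq]

lemma iso_support {n : ℕ} {Pd b P : Fin n → ℝ} (h : IsISOOpt Pd b P) {i j : Fin n}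
    (hij : j ≠ i) (hlt : b j < b i) : P i = 0 := by
  rcases eq_or_lt_of_le (h.1.2 i) with heq | hpos
  · exact heq.symm
  exfalso
  have hQfeas : Feasible Pd
      (fun k => P k + (if k = j then P i else 0) - (if k = i then P i else 0)) := by
    refine ⟨?_, ?_⟩
    · rw [show ∑ k, (P k + (if k = j then P i else 0) - (if k = i then P i else 0))
          = ∑ k, P k from by
        simp [Finset.sum_add_distrib, Finset.sum_sub_distrib]]
      exact h.1.1
    · intro k
      dsimp only
      split_ifs with h1 h2 h2
      · exact absurd (h1.symm.trans h2) hij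
      · linarith [h.1.2 k, hpos]
      · subst h2; simp
      · simpa using h.1.2 k
  have hval := h.2 _ hQfeas
  have hsum : ∑ k, b k * (P k + (if k = j then P i else 0) - (if k = i then P i else 0))
      = ∑ k, b k * P k + (b j - b i) * P i := by
    simp only [mul_add, mul_sub, Finset.sum_add_distrib, Finset.sum_sub_distrib, mul_ite,
      mul_zero, Finset.sum_ite_eq', Finset.mem_univ, if_pos]
    ring
  rw [hsum] at hval
  nlinarith

open Matrix

/-- Any equilibrium of the interconnection of the
ISO–generator bidding dynamics with the power network swing dynamics, having
at least two strictly producing generators, is efficient: the frequency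
deviation is zero, the generation profile is the unique minimizer of the ED
problem, and the bid profile is an efficient Nash equilibrium. -/
theorem equilibria_are_efficient {n : ℕ} (hn : 2 ≤ n)
    (C C' : Fin n → ℝ → ℝ) (hC : ∀ i, CostAssumptions (C i) (C' i))
    (g : Fin n → ℝ → ℝ) (hg : ∀ i β, IsUniqueArgmaxProfit (C i) β (g i β))
    (Pd : Fin n → ℝ) (hPd : ∀ i, 0 ≤ Pd i) (hPdpos : 0 < ∑ i, Pd i)
    (Dt : Matrix (Fin n) (Fin (n - 1)) ℝ)
    (hker : ∀ w : Fin n → ℝ, Dtᵀ.mulVec w = 0 ↔ ∃ c : ℝ, ∀ i, w i = c)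
    (A : Fin n → ℝ) (hA : ∀ i, 0 < A i)
    (ρ : ℝ) (hρ : 0 < ρ) (σ : ℝ)
    (ω bbar Pbar : Fin n → ℝ) (lam : ℝ) (u : Fin (n - 1) → ℝ)
    (μb μg : Fin n → ℝ)
    -- equilibrium conditions
    (h1 : Dtᵀ.mulVec ω = 0)
    (h2 : ∀ i, 0 = -(Dt.mulVec u) i - A i * ω i + Pbar i - Pd i)
    (h3 : ∀ i, (0 : ℝ) = Pbar i - g i (bbar i) + μb i)
    (h4 : ∀ i, (0 : ℝ) = lam - bbar i + ρ * (∑ j, (Pd j - Pbar j))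
        - σ ^ 2 * ω i + μg i)
    (h5 : (0 : ℝ) = ∑ i, (Pd i - Pbar i))
    (hbbar : ∀ i, 0 ≤ bbar i) (hμb : ∀ i, 0 ≤ μb i)
    (hcompb : ∑ i, bbar i * μb i = 0)
    (hPbar : ∀ i, 0 ≤ Pbar i) (hμg : ∀ i, 0 ≤ μg i)
    (hcompg : ∑ i, Pbar i * μg i = 0)
    (htwo : ∃ i j, i ≠ j ∧ 0 < Pbar i ∧ 0 < Pbar j) :
    ω = 0 ∧
    (IsEDOpt C Pd Pbar ∧ ∀ Q, IsEDOpt C Pd Q → Q = Pbar) ∧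
    (IsEfficientBid C Pd bbar ∧ IsNash C Pd bbar) := by
  have hn0 : (0 : ℕ) < n := by omega
  -- termwise complementarity
  have hbμb : ∀ i, bbar i * μb i = 0 := fun i =>
    (Finset.sum_eq_zero_iff_of_nonneg
      (fun k _ => mul_nonneg (hbbar k) (hμb k))).mp hcompb i (Finset.mem_univ i)
  have hPμg : ∀ i, Pbar i * μg i = 0 := fun i =>
    (Finset.sum_eq_zero_iff_of_nonneg
      (fun k _ => mul_nonneg (hPbar k) (hμg k))).mp hcompg i (Finset.mem_univ i)
  have hsumP : ∑ i, Pbar i = ∑ i, Pd i := by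
    have h5' := h5.symm
    rw [Finset.sum_sub_distrib] at h5'
    linarith
  -- ω = 0
  obtain ⟨c, hcω⟩ := (hker ω).mp h1
  have hDt1 : ∀ j, ∑ i, Dt i j = 0 := by
    have h0 : Dtᵀ.mulVec (fun _ => (1 : ℝ)) = 0 := (hker _).mpr ⟨1, fun _ => rfl⟩
    intro j
    have := congrFun h0 j
    simpa [Matrix.mulVec, dotProduct, Matrix.transpose_apply] using this
  have hsumDu : ∑ i, (Dt.mulVec u) i = 0 := by
    calc ∑ i, (Dt.mulVec u) i = ∑ i, ∑ j, Dt i j * u j := by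
          simp [Matrix.mulVec, dotProduct]
      _ = ∑ j, (∑ i, Dt i j) * u j := by rw [Finset.sum_comm]; simp [Finset.sum_mul]
      _ = 0 := by simp [hDt1]
  have hsumAω : ∑ i, A i * ω i = 0 := by
    have hs : ∑ i, (-(Dt.mulVec u) i - A i * ω i + Pbar i - Pd i) = 0 :=
      Finset.sum_eq_zero fun i _ => (h2 i).symm
    rw [Finset.sum_sub_distrib, Finset.sum_add_distrib, Finset.sum_sub_distrib,
      Finset.sum_neg_distrib] at hs
    linarith
  have hApos : 0 < ∑ i, A i := Finset.sum_pos (fun i _ => hA i) ⟨⟨0, hn0⟩, Finset.mem_univ _⟩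
  have heqc : (∑ i, A i) * c = 0 := by
    rw [Finset.sum_mul,
      show ∑ i, A i * c = ∑ i, A i * ω i from
        Finset.sum_congr rfl fun i _ => by rw [hcω i]]
    exact hsumAω
  have hc0 : c = 0 := by
    rcases mul_eq_zero.mp heqc with h | h
    · exact absurd h (ne_of_gt hApos)
    · exact h
  have hω0 : ω = 0 := funext fun i => by simp [hcω i, hc0]
  -- bids decompose as lam + μg
  have hb_eq : ∀ i, bbar i = lam + μg i := by
    intro i
    have h4i := h4 i
    rw [← h5] at h4i
    have hωi : ω i = 0 := by rw [hω0]; rfl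
    rw [hωi] at h4i
    simp at h4i
    linarith
  -- g i 0 = 0
  have hg0 : ∀ i, g i 0 = 0 := by
    intro i
    refine ((hg i 0).2.2 0 le_rfl ?_).symm
    intro R hR
    nlinarith [grad_le (hC i) le_rfl hR,
      mul_nonneg (cost_deriv_nonneg (hC i) le_rfl) hR]
  -- Pbar = g(bbar)
  have hPg : ∀ i, Pbar i = g i (bbar i) := by
    intro i
    rcases eq_or_lt_of_le (hbbar i) with hb0 | hbpos
    · have h3i := h3 i
      rw [← hb0, hg0 i] at h3i
      rw [← hb0, hg0 i]
      linarith [hμb i, hPbar i]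
    · have hμb0 : μb i = 0 := by
        rcases mul_eq_zero.mp (hbμb i) with h | h
        · exact absurd h (ne_of_gt hbpos)
        · exact h
      have h3i := h3 i
      linarith
  have hmaxP : ∀ i Q, 0 ≤ Q → bbar i * Q - C i Q ≤ bbar i * Pbar i - C i (Pbar i) := by
    intro i Q hQ
    rw [hPg i]
    exact (hg i (bbar i)).2.1 Q hQ
  have hfocle : ∀ i, bbar i ≤ C' i (Pbar i) := fun i =>
    foc_le (hC i) (hPbar i) (hmaxP i)
  have hlam_le : ∀ i, lam ≤ C' i (Pbar i) := by
    intro i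
    have := hμg i
    have := hb_eq i
    linarith [hfocle i]
  have hlam_eq : ∀ i, 0 < Pbar i → C' i (Pbar i) = lam := by
    intro i hpos
    have hμg0 : μg i = 0 := by
      rcases mul_eq_zero.mp (hPμg i) with h | h
      · exact absurd h (ne_of_gt hpos)
      · exact h
    have hfocge := foc_ge (hC i) hpos (hmaxP i)
    have := hb_eq i
    linarith [hfocle i]
  have hmuP : ∀ i, (C' i (Pbar i) - lam) * Pbar i = 0 := by
    intro i
    rcases eq_or_lt_of_le (hPbar i) with h | h
    · rw [← h]; ring
    · rw [hlam_eq i h]; ring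
  have hfeas : Feasible Pd Pbar := ⟨hsumP, hPbar⟩
  -- key KKT inequality
  have hkey : ∀ Q, Feasible Pd Q → 0 ≤ ∑ i, C' i (Pbar i) * (Q i - Pbar i) := by
    intro Q hQ
    have hexp : ∑ i, C' i (Pbar i) * (Q i - Pbar i)
        = lam * (∑ i, Q i) - lam * (∑ i, Pbar i)
          + ∑ i, (C' i (Pbar i) - lam) * Q i - ∑ i, (C' i (Pbar i) - lam) * Pbar i := by
      rw [Finset.mul_sum, Finset.mul_sum, ← Finset.sum_sub_distrib, ← Finset.sum_add_distrib,
        ← Finset.sum_sub_distrib]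
      exact Finset.sum_congr rfl fun i _ => by ring
    rw [hexp, hQ.1, hsumP]
    have hA1 : 0 ≤ ∑ i, (C' i (Pbar i) - lam) * Q i :=
      Finset.sum_nonneg fun i _ => mul_nonneg (by linarith [hlam_le i]) (hQ.2 i)
    have hA2 : ∑ i, (C' i (Pbar i) - lam) * Pbar i = 0 :=
      Finset.sum_eq_zero fun i _ => hmuP i
    linarith
  have hED : IsEDOpt C Pd Pbar := by
    refine ⟨hfeas, ?_⟩
    intro Q hQ
    have h2' := Finset.sum_le_sum
      (fun i (_ : i ∈ Finset.univ) => grad_le (hC i) (hPbar i) (hQ.2 i))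
    rw [Finset.sum_add_distrib] at h2'
    linarith [hkey Q hQ]
  have hUniq : ∀ Q, IsEDOpt C Pd Q → Q = Pbar := by
    intro Q hQ
    by_contra hne
    obtain ⟨k, hk⟩ := Function.ne_iff.mp hne
    have hstrict : ∑ i, (C i (Pbar i) + C' i (Pbar i) * (Q i - Pbar i)) < ∑ i, C i (Q i) := by
      refine Finset.sum_lt_sum (fun i _ => grad_le (hC i) (hPbar i) (hQ.1.2 i))
        ⟨k, Finset.mem_univ k, grad_lt (hC k) (hPbar k) (hQ.1.2 k) (Ne.symm hk)⟩
    rw [Finset.sum_add_distrib] at hstrict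
    have hk2 := hkey Q hQ.1
    have hopt := hQ.2 Pbar hfeas
    linarith
  have hISO : IsISOOpt Pd bbar Pbar := by
    refine ⟨hfeas, ?_⟩
    intro Q hQ
    have hexp : ∀ R : Fin n → ℝ, ∑ i, bbar i * R i
        = lam * (∑ i, R i) + ∑ i, μg i * R i := by
      intro R
      rw [Finset.mul_sum, ← Finset.sum_add_distrib]
      exact Finset.sum_congr rfl fun i _ => by rw [hb_eq i]; ring
    rw [hexp Q, hexp Pbar, hQ.1, hsumP]
    have hA1 : 0 ≤ ∑ i, μg i * Q i :=
      Finset.sum_nonneg fun i _ => mul_nonneg (hμg i) (hQ.2 i)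
    have hA2 : ∑ i, μg i * Pbar i = 0 :=
      Finset.sum_eq_zero fun i _ => by rw [mul_comm]; exact hPμg i
    linarith
  have hEff : IsEfficientBid C Pd bbar := by
    refine ⟨hbbar, ?_⟩
    intro Pstar hPstar
    rw [hUniq Pstar hPstar]
    refine ⟨hISO, ?_⟩
    intro i Pq hPq
    have h := hmaxP i Pq hPq
    simp only [Payoff]
    nlinarith [h]
  have hNash : IsNash C Pd bbar := by
    refine ⟨hbbar, Pbar, hISO, ?_⟩
    intro i bi hbi hne P hP
    simp only [Payoff]
    have hPi : 0 ≤ P i := hP.1.2 i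
    have hmaxi := hmaxP i (P i) hPi
    rcases lt_or_gt_of_ne hne with hlt | hgt
    · have : P i * bi ≤ P i * bbar i := mul_le_mul_of_nonneg_left hlt.le hPi
      nlinarith [hmaxi]
    · obtain ⟨a, b2, hab, ha, hb2⟩ := htwo
      have hj : ∃ j, j ≠ i ∧ 0 < Pbar j := by
        rcases eq_or_ne a i with rfl | hai
        · exact ⟨b2, Ne.symm hab, hb2⟩
        · exact ⟨a, hai, ha⟩
      obtain ⟨j, hji, hjpos⟩ := hj
      have hμgj : μg j = 0 := by
        rcases mul_eq_zero.mp (hPμg j) with h | h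
        · exact absurd h (ne_of_gt hjpos)
        · exact h
      have hbj : bbar j = lam := by rw [hb_eq j, hμgj]; ring
      have hblt : (Function.update bbar i bi) j < (Function.update bbar i bi) i := by
        rw [Function.update_self, Function.update_of_ne hji]
        have hli : lam ≤ bbar i := by linarith [hb_eq i, hμg i]
        linarith [hbj]
      have hPi0 : P i = 0 := iso_support hP hji hblt
      rw [hPi0]
      have h0 := hmaxP i 0 le_rfl
      nlinarith [h0]
  exact ⟨hω0, ⟨hED, hUniq⟩, hEff, hNash⟩
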